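/- (Gleason-type lemma.) Let G be a group and let {1} = H₀ ⊆ H₁ ⊆ ⋯ ⊆ H_k be a nested sequence of subgroups of G (with H₀ the trivial subgroup). Let A be a finite symmetric subset of G (i.e. a ∈ A implies a⁻¹ ∈ A), and for each i set A_i := A² ∩ H_i. Assume that for every i = 0, …, k−1 the subgroup generated by A_{i+1} is NOT contained in the set A_{i+1}·H_i (the set of products a·h with a ∈ A_{i+1}, h ∈ H_i). Then |A⁵| ≥ k·|A|. -/

import Mathlib

open scoped Pointwise

/-- A finite subset `A` of a group `G` is a `K`-approximate subgroup if it is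
symmetric, contains the identity, and there is a symmetric subset `X ⊆ A·A·A`
with `|X| ≤ K` such that `A·A ⊆ X·A`. -/
def IsApproxSubgroup {G : Type*} [Group G] (K : ℝ) (A : Set G) : Prop :=
  A.Finite ∧ (1 : G) ∈ A ∧ (∀ a ∈ A, a⁻¹ ∈ A) ∧
    ∃ X : Set G, X.Finite ∧ X ⊆ A * A * A ∧ (∀ x ∈ X, x⁻¹ ∈ X) ∧
      (X.ncard : ℝ) ≤ K ∧ A * A ⊆ X * A

lemma my_closure_subset {G : Type*} [Group G] {S : Set G} {K : Subgroup G}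
    (h1 : (1:G) ∈ S) (hsyminv : S⁻¹ = S)
    (hSS : S * S ⊆ S * (K : Set G)) :
    (Subgroup.closure S : Set G) ⊆ S * (K : Set G) := by
  intro x hx
  have hx' : x ∈ Submonoid.closure S := by
    have := Subgroup.closure_toSubmonoid S
    rw [hsyminv, Set.union_self] at this
    rw [← this]
    exact hx
  obtain ⟨l, hl, rfl⟩ := Submonoid.exists_list_of_mem_closure hx'
  clear hx hx'
  induction l with
  | nil => exact ⟨1, h1, 1, K.one_mem, by simp⟩
  | cons a t ih =>
    have ha : a ∈ S := hl a (by simp)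
    obtain ⟨s, hs, h, hh, hsh⟩ := ih (fun y hy => hl y (by simp [hy]))
    obtain ⟨s', hs', h', hh', h2⟩ := hSS (Set.mul_mem_mul ha hs)
    refine ⟨s', hs', h' * h, K.mul_mem hh' hh, ?_⟩
    rw [List.prod_cons, ← hsh, ← mul_assoc, ← h2, mul_assoc]


/-- Gleason-type lemma: if `{1} = H₀ ⊆ H₁ ⊆ ⋯ ⊆ H_k` are subgroups and the
subgroup generated by `A_{i+1} := A² ∩ H_{i+1}` is not contained in
`A_{i+1}·H_i` for each `i < k`, then `|A⁵| ≥ k|A|`. -/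
theorem stmt_4 {G : Type*} [Group G] (k : ℕ) (H : ℕ → Subgroup G)
    (hH0 : H 0 = ⊥) (hmono : ∀ i, i < k → H i ≤ H (i + 1))
    (A : Set G) (hfin : A.Finite) (hsym : ∀ a ∈ A, a⁻¹ ∈ A)
    (hgen : ∀ i, i < k →
      ¬ ((Subgroup.closure (A * A ∩ (H (i + 1) : Set G)) : Set G) ⊆
          (A * A ∩ (H (i + 1) : Set G)) * (H i : Set G))) :
    k * A.ncard ≤ (A ^ 5).ncard := by
  classical
  rcases A.eq_empty_or_nonempty with rfl | ⟨a0, ha0⟩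
  · simp
  -- basic symmetry facts
  have hAAinv : ∀ x ∈ A * A, x⁻¹ ∈ A * A := by
    rintro x ⟨u, hu, v, hv, rfl⟩
    rw [mul_inv_rev]
    exact Set.mul_mem_mul (hsym v hv) (hsym u hu)
  set S : ℕ → Set G := fun i => A * A ∩ (H i : Set G) with hS
  have hone : ∀ i, (1:G) ∈ S i := by
    intro i
    exact ⟨⟨a0, ha0, a0⁻¹, hsym a0 ha0, by simp⟩, (H i).one_mem⟩
  have hSinv : ∀ i, (S i)⁻¹ = S i := by
    intro i
    ext x
    simp only [Set.mem_inv]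
    constructor
    · rintro ⟨hx1, hx2⟩
      exact ⟨by simpa using hAAinv _ hx1, by simpa using (H i).inv_mem hx2⟩
    · rintro ⟨hx1, hx2⟩
      exact ⟨hAAinv _ hx1, (H i).inv_mem hx2⟩
  -- key escape elements
  have key : ∀ i, i < k → ∃ p q : G, p ∈ S (i+1) ∧ q ∈ S (i+1) ∧
      p * q ∉ S (i+1) * (H i : Set G) := by
    intro i hi
    by_contra hc
    push_neg at hc
    refine hgen i hi (my_closure_subset (hone (i+1)) (hSinv (i+1)) ?_)
    rintro z ⟨p, hp, q, hq, rfl⟩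
    exact hc p q hp hq
  choose p q hp hq hpq using key
  -- subgroup chain
  have chain : ∀ n, n ≤ k → ∀ m, m ≤ n → H m ≤ H n := by
    intro n
    induction n with
    | zero => intro _ m hm; rw [Nat.le_zero.mp hm]
    | succ n ih =>
      intro hnk m hm
      rcases Nat.lt_succ_iff_lt_or_eq.mp (Nat.lt_succ_of_le hm) with h | h
      · exact (ih (le_trans (Nat.le_succ n) hnk) m (Nat.lt_succ_iff.mp h)).trans
          (hmono n (by omega))
      · rw [h]
  -- the translating elements
  set y : ℕ → G := fun i => if h : i < k then (p i h * q i h)⁻¹ else 1 with hy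
  -- finiteness
  have h5eq : A ^ 5 = (A*A) * (A*A) * A := by
    rw [show (5:ℕ) = 2+1+1+1 from rfl, pow_succ, pow_succ, pow_succ, sq,
      mul_assoc (A*A) A A]
  have h5 : (A ^ 5).Finite := by
    rw [h5eq]
    exact (((hfin.mul hfin).mul (hfin.mul hfin)).mul hfin)
  set B : Finset G := hfin.toFinset with hB
  set U : Finset G := (Finset.range k).biUnion (fun i => B.image (fun a => y i * a))
    with hU
  -- disjointness helper
  have hdisj : ∀ i j, i < k → j < k → j < i → ∀ a ∈ A, ∀ b ∈ A,
      y i * a = y j * b → False := by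
    intro i j hi hj hji a ha b hb heq
    have hyi : y i = (p i hi * q i hi)⁻¹ := by rw [hy]; simp [hi]
    have hyj : y j = (p j hj * q j hj)⁻¹ := by rw [hy]; simp [hj]
    set P := p i hi * q i hi with hP
    set Q := p j hj * q j hj with hQ
    rw [hyi, hyj] at heq
    -- P = (P * Q⁻¹) * Q and P * Q⁻¹ = a * b⁻¹
    have hsab : P * Q⁻¹ = a * b⁻¹ := by
      have h1 : a = P * (Q⁻¹ * b) := by rw [← heq]; group
      rw [h1]; group
    have hPmem : P ∈ (H (i+1) : Set G) :=
      (H (i+1)).mul_mem (hp i hi).2 (hq i hi).2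
    have hQi : Q ∈ H i := by
      have h1 : Q ∈ H (j+1) := (H (j+1)).mul_mem (hp j hj).2 (hq j hj).2
      exact chain i hi.le (j+1) (by omega) h1
    have hsH : P * Q⁻¹ ∈ (H (i+1) : Set G) :=
      (H (i+1)).mul_mem hPmem ((H (i+1)).inv_mem (hmono i hi hQi))
    have hsS : P * Q⁻¹ ∈ S (i+1) := by
      refine ⟨?_, hsH⟩
      rw [hsab]
      exact Set.mul_mem_mul ha (hsym b hb)
    have : P ∈ S (i+1) * (H i : Set G) := by
      have := Set.mul_mem_mul hsS (show Q ∈ (H i : Set G) from hQi)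
      simpa using this
    exact hpq i hi this
  -- U ⊆ (A^5).toFinset
  have hsub : U ⊆ h5.toFinset := by
    intro z hz
    rw [hU, Finset.mem_biUnion] at hz
    obtain ⟨i, hi, hz⟩ := hz
    rw [Finset.mem_range] at hi
    rw [Finset.mem_image] at hz
    obtain ⟨a, ha, rfl⟩ := hz
    rw [hB, Set.Finite.mem_toFinset] at ha
    rw [Set.Finite.mem_toFinset, h5eq]
    have hyi : y i = (p i hi * q i hi)⁻¹ := by rw [hy]; simp [hi]
    have hyAA : y i ∈ (A*A) * (A*A) := by
      rw [hyi, mul_inv_rev]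
      exact Set.mul_mem_mul (hAAinv _ (hq i hi).1) (hAAinv _ (hp i hi).1)
    exact Set.mul_mem_mul hyAA ha
  -- cardinality of U
  have hcard : U.card = k * B.card := by
    rw [hU, Finset.card_biUnion]
    · rw [Finset.sum_congr rfl (fun i _ => Finset.card_image_of_injective B
        (mul_right_injective (y i)))]
      simp [Finset.sum_const, Finset.card_range, mul_comm]
    · intro i hi j hj hne
      rw [Finset.mem_coe, Finset.mem_range] at hi hj
      rw [Function.onFun, Finset.disjoint_left]
      intro z hzi hzj
      rw [Finset.mem_image] at hzi hzj
      obtain ⟨a, ha, rfl⟩ := hzi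
      obtain ⟨b, hb, heq⟩ := hzj
      rw [hB, Set.Finite.mem_toFinset] at ha hb
      rcases hne.lt_or_gt with h | h
      · exact hdisj j i hj hi h b hb a ha heq
      · exact hdisj i j hi hj h a ha b hb heq.symm
  have hBcard : A.ncard = B.card := Set.ncard_eq_toFinset_card A hfin
  have h5card : (A ^ 5).ncard = h5.toFinset.card := Set.ncard_eq_toFinset_card _ h5
  rw [hBcard, h5card, ← hcard]
  exact Finset.card_le_card hsub
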